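/- Let N ≥ 2 be an integer and let b₀, b₁, …, b_{N-2} be real numbers such that b₀ > 0 and b_k < 0 for 1 ≤ k ≤ N-2, and suppose there exists C₀ > 0 such that ∑_{j=1}^{N-1} b_{|i-j|} > C₀ for every i ∈ {1, …, N-1}. Let B₁ be the (N-1)×(N-1) symmetric Toeplitz matrix with entries (B₁)_{i,j} = b_{|i-j|}, and let U, U_h, G, F ∈ ℝ^{N-1} satisfy B₁ U_h + G = F. Then ‖U - U_h‖₂ ≤ C₀⁻¹ ‖F - (B₁ U + G)‖₂, where ‖·‖₂ is the Euclidean norm. -/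

import Mathlib

open Matrix Finset

lemma quadform_lower {n : ℕ} (A : Matrix (Fin n) (Fin n) ℝ)
    (hsym : ∀ i j, A i j = A j i) (hoff : ∀ i j, i ≠ j → A i j ≤ 0)
    (x : Fin n → ℝ) :
    ∑ i, (∑ j, A i j) * x i ^ 2 ≤ ∑ i, ∑ j, A i j * x i * x j := by
  have key : ∑ i, ∑ j, A i j * x j ^ 2 = ∑ i, ∑ j, A i j * x i ^ 2 := by
    rw [Finset.sum_comm]
    exact Finset.sum_congr rfl fun j _ => Finset.sum_congr rfl fun i _ => by rw [hsym]
  have hpos : 0 ≤ ∑ i, ∑ j, (- A i j) * (x i - x j) ^ 2 := by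
    refine Finset.sum_nonneg fun i _ => Finset.sum_nonneg fun j _ => ?_
    rcases eq_or_ne i j with rfl | h
    · simp
    · exact mul_nonneg (neg_nonneg.2 (hoff i j h)) (sq_nonneg _)
  have expand : ∑ i, ∑ j, (- A i j) * (x i - x j) ^ 2
      = (- ∑ i, ∑ j, A i j * x i ^ 2) - (∑ i, ∑ j, A i j * x j ^ 2)
        + 2 * ∑ i, ∑ j, A i j * x i * x j := by
    simp only [← Finset.sum_neg_distrib, ← Finset.sum_sub_distrib, Finset.mul_sum,
      ← Finset.sum_add_distrib]
    exact Finset.sum_congr rfl fun i _ => Finset.sum_congr rfl fun j _ => by ring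
  have hmul : ∑ i, (∑ j, A i j) * x i ^ 2 = ∑ i, ∑ j, A i j * x i ^ 2 := by
    exact Finset.sum_congr rfl fun i _ => by rw [Finset.sum_mul]
  rw [hmul]
  linarith [hpos, expand, key]

/-- For the symmetric Toeplitz matrix `B₁` with entries `b_{|i-j|}`,
`b₀ > 0`, `b_k < 0` for `1 ≤ k ≤ N-2`, and row sums `> C₀ > 0`, if `B₁ U_h + G = F`
then `‖U - U_h‖₂ ≤ C₀⁻¹ ‖F - (B₁ U + G)‖₂` in the Euclidean norm. -/
theorem stmt1 (N : ℕ) (hN : 2 ≤ N) (b : ℕ → ℝ)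
    (hb0 : 0 < b 0)
    (hbneg : ∀ k : ℕ, 1 ≤ k → k ≤ N - 2 → b k < 0)
    (C₀ : ℝ) (hC₀ : 0 < C₀)
    (B₁ : Matrix (Fin (N - 1)) (Fin (N - 1)) ℝ)
    (hB₁ : ∀ i j : Fin (N - 1), B₁ i j = b ((i : ℤ) - (j : ℤ)).natAbs)
    (hrow : ∀ i : Fin (N - 1), C₀ < ∑ j : Fin (N - 1), b ((i : ℤ) - (j : ℤ)).natAbs)
    (U Uh G F : Fin (N - 1) → ℝ)
    (hsys : B₁.mulVec Uh + G = F) :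
    Real.sqrt (∑ i, (U i - Uh i) ^ 2)
      ≤ C₀⁻¹ * Real.sqrt (∑ i, (F i - (B₁.mulVec U + G) i) ^ 2) := by
  set x : Fin (N - 1) → ℝ := fun i => U i - Uh i with hx
  -- residual equals B₁ x up to sign
  have hres : ∀ i, F i - (B₁.mulVec U + G) i = - (B₁.mulVec x) i := by
    intro i
    have : F i = (B₁.mulVec Uh) i + G i := by rw [← hsys]; rfl
    simp only [this, Pi.add_apply, mulVec, dotProduct, hx]
    have hsum : ∑ j, B₁ i j * Uh j - ∑ j, B₁ i j * U j
        = -∑ j, B₁ i j * (U j - Uh j) := by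
      rw [← Finset.sum_sub_distrib, ← Finset.sum_neg_distrib]
      exact Finset.sum_congr rfl fun j _ => by ring
    linarith [hsum]
  have hressq : ∑ i, (F i - (B₁.mulVec U + G) i) ^ 2 = ∑ i, (B₁.mulVec x i) ^ 2 := by
    exact Finset.sum_congr rfl fun i _ => by rw [hres]; ring
  rw [hressq]
  -- symmetry and off-diagonal sign of B₁
  have hsym : ∀ i j, B₁ i j = B₁ j i := by
    intro i j; rw [hB₁, hB₁]
    congr 1
    omega
  have hoff : ∀ i j : Fin (N - 1), i ≠ j → B₁ i j ≤ 0 := by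
    intro i j h
    rw [hB₁]
    have hi := i.isLt
    have hj := j.isLt
    have hne : (i : ℕ) ≠ (j : ℕ) := fun hc => h (Fin.ext hc)
    refine le_of_lt (hbneg _ ?_ ?_) <;> omega
  -- quadratic form lower bound
  set S : ℝ := ∑ i, x i ^ 2 with hS
  have hSnn : 0 ≤ S := Finset.sum_nonneg fun i _ => sq_nonneg _
  have hq1 : C₀ * S ≤ ∑ i, (∑ j, B₁ i j) * x i ^ 2 := by
    rw [hS, Finset.mul_sum]
    refine Finset.sum_le_sum fun i _ => ?_
    have h1 : C₀ ≤ ∑ j, B₁ i j := by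
      refine le_of_lt ?_
      calc C₀ < ∑ j : Fin (N - 1), b ((i : ℤ) - (j : ℤ)).natAbs := hrow i
        _ = ∑ j, B₁ i j := Finset.sum_congr rfl fun j _ => (hB₁ i j).symm
    exact mul_le_mul_of_nonneg_right h1 (sq_nonneg _)
  have hq2 : ∑ i, (∑ j, B₁ i j) * x i ^ 2 ≤ ∑ i, (B₁.mulVec x) i * x i := by
    have := quadform_lower B₁ hsym hoff x
    calc ∑ i, (∑ j, B₁ i j) * x i ^ 2 ≤ ∑ i, ∑ j, B₁ i j * x i * x j := this
      _ = ∑ i, (B₁.mulVec x) i * x i := by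
        refine Finset.sum_congr rfl fun i _ => ?_
        simp only [mulVec, dotProduct, Finset.sum_mul]
        exact Finset.sum_congr rfl fun j _ => by ring
  -- Cauchy-Schwarz
  have hcs : ∑ i, (B₁.mulVec x) i * x i
      ≤ Real.sqrt (∑ i, (B₁.mulVec x i) ^ 2) * Real.sqrt S := by
    simpa [hS] using Real.sum_mul_le_sqrt_mul_sqrt Finset.univ (fun i => B₁.mulVec x i) x
  have hkey : C₀ * S ≤ Real.sqrt (∑ i, (B₁.mulVec x i) ^ 2) * Real.sqrt S :=
    le_trans (le_trans hq1 hq2) hcs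
  have hBnn : 0 ≤ Real.sqrt (∑ i, (B₁.mulVec x i) ^ 2) := Real.sqrt_nonneg _
  have hmain : Real.sqrt S ≤ C₀⁻¹ * Real.sqrt (∑ i, (B₁.mulVec x i) ^ 2) := by
    rcases eq_or_lt_of_le hSnn with h0 | h0
    · rw [← h0, Real.sqrt_zero]
      positivity
    · have hsq : Real.sqrt S * Real.sqrt S = S := Real.mul_self_sqrt hSnn
      have hspos : 0 < Real.sqrt S := Real.sqrt_pos.2 h0
      have : C₀ * Real.sqrt S ≤ Real.sqrt (∑ i, (B₁.mulVec x i) ^ 2) := by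
        rw [← mul_le_mul_iff_of_pos_right hspos]
        calc C₀ * Real.sqrt S * Real.sqrt S = C₀ * S := by rw [mul_assoc, hsq]
          _ ≤ _ := hkey
      calc Real.sqrt S = C₀⁻¹ * (C₀ * Real.sqrt S) := by field_simp
        _ ≤ C₀⁻¹ * Real.sqrt (∑ i, (B₁.mulVec x i) ^ 2) :=
          mul_le_mul_of_nonneg_left this (inv_nonneg.2 hC₀.le)
  exact hmain
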